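/- If in a maximal (k+2)-quasiplanar convex geometric representation E on ZMod n a vertex v has degree at most 2k+2, then the neighbors of v are exactly the vertices u such that {u, v} is a j-pair for some j ≤ k, i.e., v is adjacent precisely to the k+1 nearest vertices on each side of v in the cyclic order (when n ≥ 2k+3). -/

import Mathlib

open Finset
open scoped Classical

variable {n : ℕ}

/-- The open cyclic arc from `i` to `j` (going in the positive direction), excluding both. -/
def Arc [NeZero n] (i j : ZMod n) : Finset (ZMod n) :=
  univ.filter fun t => 0 < (t - i).val ∧ (t - i).val < (j - i).val

/-- Number of bars on the open arc from `i` to `j` strictly longer than the shorter of `i, j`. -/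
noncomputable def exceedCount [NeZero n] (ℓ : ZMod n → ℝ) (i j : ZMod n) : ℕ :=
  ((Arc i j).filter fun t => min (ℓ i) (ℓ j) < ℓ t).card

/-- The cylindrical semi-bar `k`-visibility graph: `i ≠ j` are adjacent iff on one of the two
open cyclic arcs between them at most `k` bars are longer than `min (ℓ i) (ℓ j)`. -/
noncomputable def CylGraph (k : ℕ) [NeZero n] (ℓ : ZMod n → ℝ) : SimpleGraph (ZMod n) where
  Adj i j := i ≠ j ∧ (exceedCount ℓ i j ≤ k ∨ exceedCount ℓ j i ≤ k)
  symm := ⟨fun i j h => ⟨h.1.symm, h.2.symm⟩⟩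
  loopless := ⟨fun i h => h.1 rfl⟩

noncomputable instance (k : ℕ) [NeZero n] (ℓ : ZMod n → ℝ) :
    DecidableRel (CylGraph k ℓ).Adj := Classical.decRel _

/-- Two chords `{a,b}` and `{c,d}` with all four endpoints distinct cross iff exactly one of
`c, d` lies on the open cyclic arc from `a` to `b`. -/
def Crosses [NeZero n] (a b c d : ZMod n) : Prop :=
  a ≠ b ∧ c ≠ d ∧ a ≠ c ∧ a ≠ d ∧ b ≠ c ∧ b ≠ d ∧
    Xor' (c ∈ Arc a b) (d ∈ Arc a b)

/-- A convex geometric representation (edges drawn as chords of the cyclic order on `ZMod n`)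
is `m`-quasiplanar if it has no `m` pairwise crossing edges. -/
def QuasiPlanar (m : ℕ) [NeZero n] (G : SimpleGraph (ZMod n)) : Prop :=
  ¬ ∃ f g : Fin m → ZMod n, (∀ p, G.Adj (f p) (g p)) ∧
      ∀ p q, p ≠ q → Crosses (f p) (g p) (f q) (g q)

/-- Maximality: adding any absent chord creates `m` pairwise crossing edges. -/
def MaximalQP (m : ℕ) [NeZero n] (G : SimpleGraph (ZMod n)) : Prop :=
  ∀ a b : ZMod n, a ≠ b → ¬ G.Adj a b →
    ¬ QuasiPlanar m (G ⊔ SimpleGraph.fromEdgeSet {s(a, b)})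

/-- in a maximal `(k+2)`-quasiplanar convex geometric representation on
`n ≥ 2k+3` vertices, a vertex `v` of degree at most `2k+2` is adjacent exactly to the
vertices `u` for which `{u, v}` is a `j`-pair for some `j ≤ k`, i.e. to the `k+1` nearest
vertices on each side of `v` in the cyclic order. -/
lemma arc_card [NeZero n] (i j : ZMod n) : (Arc i j).card = (j - i).val - 1 := by
  classical
  have h := ZMod.val_lt (j - i)
  rw [show (j - i).val - 1 = (Finset.Ioo 0 (j - i).val).card by simp [Nat.card_Ioo]]
  apply Finset.card_bij (fun t _ => (t - i).val)
  · intro t ht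
    simp only [Arc, mem_filter] at ht
    simp [Finset.mem_Ioo, ht.2.1, ht.2.2]
  · intro a ha b hb hab
    exact sub_left_injective (ZMod.val_injective n hab)
  · intro m hm
    simp only [Finset.mem_Ioo] at hm
    refine ⟨i + (m : ZMod n), ?_, ?_⟩
    · simp only [Arc, mem_filter, mem_univ, true_and]
      rw [add_sub_cancel_left, ZMod.val_cast_of_lt (lt_of_lt_of_le hm.2 h.le)]
      exact hm
    · rw [add_sub_cancel_left, ZMod.val_cast_of_lt (lt_of_lt_of_le hm.2 h.le)]

lemma mem_arc_compl [NeZero n] {a b t : ZMod n} (hab : a ≠ b) (hta : t ≠ a) (htb : t ≠ b) :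
    t ∈ Arc a b ↔ t ∉ Arc b a := by
  have hy : b - a ≠ 0 := sub_ne_zero.mpr (Ne.symm hab)
  set s := (t - a).val with hs
  set d := (b - a).val with hdd
  have hd0 : 0 < d := by
    rcases Nat.eq_zero_or_pos d with h | h
    · exact absurd (ZMod.val_injective n (h.trans (ZMod.val_zero).symm) : b - a = 0) hy
    · exact h
  have hdn : d < n := ZMod.val_lt _
  have hsn : s < n := ZMod.val_lt _
  have hs0 : 0 < s := by
    rcases Nat.eq_zero_or_pos s with h | h
    · exact absurd (sub_eq_zero.mp (ZMod.val_injective n (h.trans (ZMod.val_zero).symm))) hta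
    · exact h
  have hsd : s ≠ d := by
    intro h
    exact htb (sub_left_injective (ZMod.val_injective n h : t - a = b - a))
  have hab' : (a - b).val = n - d := by
    rw [show a - b = -(b - a) by ring]
    haveI : NeZero (b - a) := ⟨hy⟩
    exact ZMod.val_neg_of_ne_zero _
  have htb' : (t - b).val = if s < d then s + (n - d) else s - d := by
    have : t - b = (t - a) + (-(b - a)) := by ring
    rw [this, ZMod.val_add]
    haveI : NeZero (b - a) := ⟨hy⟩
    rw [ZMod.val_neg_of_ne_zero]
    by_cases h : s < d
    · rw [if_pos h, Nat.mod_eq_of_lt]; omega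
    · rw [if_neg h, show s + (n - d) = (s - d) + n by omega, Nat.add_mod_right,
        Nat.mod_eq_of_lt]; omega
  constructor
  · intro h hmem
    simp only [Arc, mem_filter, mem_univ, true_and, ← hs, ← hdd] at h
    simp only [Arc, mem_filter, mem_univ, true_and, hab', htb'] at hmem
    rcases hmem with ⟨h1, h2⟩
    split_ifs at h2 with hc <;> omega
  · intro h
    simp only [Arc, mem_filter, mem_univ, true_and, hab', htb'] at h
    simp only [Arc, mem_filter, mem_univ, true_and, ← hs, ← hdd]
    refine ⟨hs0, ?_⟩
    by_contra hge
    push_neg at hge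
    apply h
    rw [if_neg (by omega)]
    omega

lemma crosses_xor_rev [NeZero n] {a b c d : ZMod n} (h : Crosses a b c d) :
    Xor' (c ∈ Arc b a) (d ∈ Arc b a) := by
  obtain ⟨hab, hcd, hac, had, hbc, hbd, hx⟩ := h
  have h1 : c ∈ Arc b a ↔ c ∉ Arc a b := mem_arc_compl hab.symm hbc.symm hac.symm
  have h2 : d ∈ Arc b a ↔ d ∉ Arc a b := mem_arc_compl hab.symm hbd.symm had.symm
  rw [h1, h2]
  rcases hx with ⟨hc, hd⟩ | ⟨hd, hc⟩
  · exact Or.inr ⟨hd, not_not.mpr hc⟩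
  · exact Or.inl ⟨hc, not_not.mpr hd⟩

/-- A family of `k+2` pairwise crossing chords, one of which has all other chords'
"inner" endpoints confined to a set `S` of at most `k` vertices, is impossible. -/
lemma no_short_family [NeZero n] {k : ℕ} {f g : Fin (k + 2) → ZMod n} {S : Finset (ZMod n)}
    (p₀ : Fin (k + 2))
    (hx : ∀ p, p ≠ p₀ → Xor' (f p ∈ S) (g p ∈ S))
    (hcross : ∀ p q, p ≠ q → Crosses (f p) (g p) (f q) (g q))
    (hS : S.card ≤ k) : False := by
  classical
  set F : Fin (k + 2) → ZMod n := fun p => if f p ∈ S then f p else g p with hF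
  have hmaps : ∀ p ∈ univ.erase p₀, F p ∈ S := by
    intro p hp
    have hp' := (mem_erase.mp hp).1
    rcases hx p hp' with ⟨h1, h2⟩ | ⟨h1, h2⟩
    · simp [hF, h1]
    · simp [hF, h1, h2]
  have hinj : Set.InjOn F (univ.erase p₀) := by
    intro p hp q hq hpq
    by_contra hne
    obtain ⟨_, _, hfc, hfd, hgc, hgd, _⟩ := hcross p q hne
    have hp1 : F p = f p ∨ F p = g p := by
      by_cases h : f p ∈ S <;> simp [hF, h]
    have hq1 : F q = f q ∨ F q = g q := by
      by_cases h : f q ∈ S <;> simp [hF, h]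
    rcases hp1 with h | h <;> rcases hq1 with h' | h' <;>
      rw [h, h'] at hpq <;> [exact hfc hpq; exact hfd hpq; exact hgc hpq; exact hgd hpq]
  have hcard := Finset.card_le_card_of_injOn F hmaps hinj
  rw [Finset.card_erase_of_mem (mem_univ _), card_univ, Fintype.card_fin] at hcard
  omega

/-- The short-chord direction: if one of the arcs between `v` and `u` has at most `k`
vertices, then maximality forces `v` and `u` to be adjacent. -/
lemma adj_of_short [NeZero n] {k : ℕ} {E : SimpleGraph (ZMod n)}
    (hq : QuasiPlanar (k + 2) E) (hmax : MaximalQP (k + 2) E) {v u : ZMod n} (huv : u ≠ v)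
    (hshort : (Arc v u).card ≤ k ∨ (Arc u v).card ≤ k) : E.Adj v u := by
  by_contra hadj
  apply hmax v u huv.symm hadj
  intro ⟨f, g, hadjall, hcross⟩
  have hE : ∀ p, E.Adj (f p) (g p) ∨
      ((f p = v ∧ g p = u) ∨ (f p = u ∧ g p = v)) := by
    intro p
    have := hadjall p
    rw [SimpleGraph.sup_adj, SimpleGraph.fromEdgeSet_adj] at this
    rcases this with h | ⟨h, _⟩
    · exact Or.inl h
    · simp only [Set.mem_singleton_iff, Sym2.eq, Sym2.rel_iff', Prod.mk.injEq,
        Prod.swap_prod_mk] at h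
      tauto
  by_cases hex : ∃ p₀, (f p₀ = v ∧ g p₀ = u) ∨ (f p₀ = u ∧ g p₀ = v)
  · obtain ⟨p₀, h₀⟩ := hex
    rcases hshort with hS | hS
    · refine no_short_family (S := Arc v u) p₀ ?_ hcross hS
      intro p hp
      have hc := hcross p₀ p (Ne.symm hp)
      rcases h₀ with ⟨h1, h2⟩ | ⟨h1, h2⟩
      · rw [h1, h2] at hc
        exact hc.2.2.2.2.2.2
      · rw [h1, h2] at hc
        exact crosses_xor_rev hc
    · refine no_short_family (S := Arc u v) p₀ ?_ hcross hS
      intro p hp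
      have hc := hcross p₀ p (Ne.symm hp)
      rcases h₀ with ⟨h1, h2⟩ | ⟨h1, h2⟩
      · rw [h1, h2] at hc
        exact crosses_xor_rev hc
      · rw [h1, h2] at hc
        exact hc.2.2.2.2.2.2
  · exact hq ⟨f, g, fun p => (hE p).resolve_right (fun h => hex ⟨p, h⟩), hcross⟩

theorem stmt13 (k : ℕ) [NeZero n] (hn : 2 * k + 3 ≤ n) (E : SimpleGraph (ZMod n))
    (hq : QuasiPlanar (k + 2) E) (hmax : MaximalQP (k + 2) E) (v : ZMod n)
    (hd : (univ.filter fun u => E.Adj v u).card ≤ 2 * k + 2) :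
    ∀ u : ZMod n, E.Adj v u ↔ (u ≠ v ∧ ((Arc v u).card ≤ k ∨ (Arc u v).card ≤ k)) := by
  classical
  set S : Finset (ZMod n) :=
    univ.filter fun u => u ≠ v ∧ ((Arc v u).card ≤ k ∨ (Arc u v).card ≤ k) with hSdef
  have hvu : ∀ u : ZMod n, u ≠ v → (v - u).val = n - (u - v).val := by
    intro u hu
    rw [show v - u = -(u - v) by ring]
    haveI : NeZero (u - v) := ⟨sub_ne_zero.mpr hu⟩
    exact ZMod.val_neg_of_ne_zero _
  have hmemS : ∀ u : ZMod n, u ∈ S ↔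
      (1 ≤ (u - v).val ∧ (u - v).val ≤ n - 1 ∧
        ((u - v).val ≤ k + 1 ∨ n - (k + 1) ≤ (u - v).val)) := by
    intro u
    simp only [hSdef, mem_filter, mem_univ, true_and]
    constructor
    · rintro ⟨hu, h⟩
      have h0 : (u - v).val ≠ 0 := by
        intro h'
        exact hu (sub_eq_zero.mp (ZMod.val_injective n (h'.trans ZMod.val_zero.symm)))
      have hlt : (u - v).val < n := ZMod.val_lt _
      rw [arc_card, arc_card, hvu u hu] at h
      omega
    · rintro ⟨h1, h2, h3⟩
      have hu : u ≠ v := by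
        intro h'
        rw [h', sub_self, ZMod.val_zero] at h1
        omega
      rw [arc_card, arc_card, hvu u hu]
      exact ⟨hu, by omega⟩
  have hScard : S.card = 2 * k + 2 := by
    have : S.card = ((Finset.Icc 1 (k + 1)) ∪ (Finset.Icc (n - (k + 1)) (n - 1))).card := by
      apply Finset.card_bij (fun u _ => (u - v).val)
      · intro u hu
        rw [hmemS] at hu
        simp only [Finset.mem_union, Finset.mem_Icc]
        omega
      · intro a ha b hb hab
        exact sub_left_injective (ZMod.val_injective n hab)
      · intro m hm
        simp only [Finset.mem_union, Finset.mem_Icc] at hm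
        have hmn : m < n := by omega
        refine ⟨v + (m : ZMod n), ?_, ?_⟩
        · rw [hmemS, add_sub_cancel_left, ZMod.val_cast_of_lt hmn]
          omega
        · rw [add_sub_cancel_left, ZMod.val_cast_of_lt hmn]
    rw [this, Finset.card_union_of_disjoint, Nat.card_Icc, Nat.card_Icc]
    · omega
    · rw [Finset.disjoint_left]
      intro m hm hm'
      simp only [Finset.mem_Icc] at hm hm'
      omega
  have hsub : S ⊆ univ.filter fun u => E.Adj v u := by
    intro u hu
    simp only [hSdef, mem_filter, mem_univ, true_and] at hu
    simp only [mem_filter, mem_univ, true_and]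
    exact adj_of_short hq hmax hu.1 hu.2
  have hEq : S = univ.filter fun u => E.Adj v u :=
    Finset.eq_of_subset_of_card_le hsub (by omega)
  intro u
  constructor
  · intro h
    have : u ∈ S := by
      rw [hEq]
      simp only [mem_filter, mem_univ, true_and]
      exact h
    simpa [hSdef, mem_filter] using this
  · rintro ⟨h1, h2⟩
    exact adj_of_short hq hmax h1 h2
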